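/- The global approximation error satisfies e_{X,X̃} := sup_{s ∈ (a, b]} |f̃(s) − f_X(s)| = max_{j ∈ {1,…,n}} E_{a_j, μ_j}[μ_j − X] ≤ max_{j ∈ {1,…,n}} p_j · (b_j − a_j)/4. -/

import Mathlib

open MeasureTheory

/-- The `j`-th region of the partition of `ℝ` induced by points `q 0 < q 1 < ⋯ < q n`:
`I_0 = (−∞, q 0]`, `I_j = (q (j−1), q j]` for `1 ≤ j ≤ n`, and `I_{n+1} = (q n, ∞)`. -/
noncomputable def seg (q : ℕ → ℝ) (n j : ℕ) : Set ℝ :=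
  if j = 0 then Set.Iic (q 0)
  else if j ≤ n then Set.Ioc (q (j - 1)) (q j)
  else Set.Ioi (q n)

/-- `p_j = P(X ∈ I_j)`. -/
noncomputable def segProb {Ω : Type*} [MeasurableSpace Ω]
    (P : Measure Ω) (X : Ω → ℝ) (q : ℕ → ℝ) (n j : ℕ) : ℝ :=
  (P {ω | X ω ∈ seg q n j}).toReal

/-- `μ_j = E[X | X ∈ I_j] = E[1_{X ∈ I_j} X] / p_j`. -/
noncomputable def segMean {Ω : Type*} [MeasurableSpace Ω]
    (P : Measure Ω) (X : Ω → ℝ) (q : ℕ → ℝ) (n j : ℕ) : ℝ :=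
  (∫ ω in {ω | X ω ∈ seg q n j}, X ω ∂P) / segProb P X q n j

/-- The induced piecewise linear approximation `f̃(s) = ∑_{j=0}^{n+1} p_j · min(s, μ_j)`. -/
noncomputable def ftilde {Ω : Type*} [MeasurableSpace Ω]
    (P : Measure Ω) (X : Ω → ℝ) (q : ℕ → ℝ) (n : ℕ) (s : ℝ) : ℝ :=
  ∑ j ∈ Finset.range (n + 2), segProb P X q n j * min s (segMean P X q n j)

lemma seg_zero (q : ℕ → ℝ) (n : ℕ) : seg q n 0 = Set.Iic (q 0) := by
  simp [seg]

lemma seg_mid (q : ℕ → ℝ) {n j : ℕ} (h1 : 1 ≤ j) (h2 : j ≤ n) :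
    seg q n j = Set.Ioc (q (j - 1)) (q j) := by
  unfold seg
  rw [if_neg (by omega), if_pos h2]

lemma seg_top (q : ℕ → ℝ) (n : ℕ) : seg q n (n + 1) = Set.Ioi (q n) := by
  unfold seg
  rw [if_neg (by omega), if_neg (by omega)]

lemma seg_measurable (q : ℕ → ℝ) (n j : ℕ) : MeasurableSet (seg q n j) := by
  unfold seg
  split_ifs
  · exact measurableSet_Iic
  · exact measurableSet_Ioc
  · exact measurableSet_Ioi

theorem global_error_formula_meas {Ω : Type*} [MeasurableSpace Ω]
    (P : Measure Ω) [IsProbabilityMeasure P]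
    (X : Ω → ℝ) (hmX : Measurable X) (hX : Integrable X P)
    (a b : ℝ) (hab : a < b) (n : ℕ) (hn : 1 ≤ n)
    (q : ℕ → ℝ) (hq0 : q 0 = a) (hqn : q n = b)
    (hmono : ∀ i < n, q i < q (i + 1))
    (hpos : ∀ j ≤ n + 1, 0 < segProb P X q n j) :
    (sSup ((fun s => |ftilde P X q n s - ∫ ω, min s (X ω) ∂P|) '' Set.Ioc a b)
        = (Finset.Icc 1 n).sup' (Finset.nonempty_Icc.2 hn)
            (fun j => ∫ ω in {ω | X ω ∈ Set.Ioc (q (j - 1)) (segMean P X q n j)},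
              (segMean P X q n j - X ω) ∂P)) ∧
      (Finset.Icc 1 n).sup' (Finset.nonempty_Icc.2 hn)
          (fun j => ∫ ω in {ω | X ω ∈ Set.Ioc (q (j - 1)) (segMean P X q n j)},
            (segMean P X q n j - X ω) ∂P)
        ≤ (Finset.Icc 1 n).sup' (Finset.nonempty_Icc.2 hn)
            (fun j => segProb P X q n j * (q j - q (j - 1)) / 4) := by
  have hqle : ∀ i j, i ≤ j → j ≤ n → q i ≤ q j := by
    intro i j hij hjn
    induction j with
    | zero => obtain rfl := Nat.le_zero.mp hij; exact le_rfl
    | succ m ih =>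
      rcases Nat.eq_or_lt_of_le hij with h | h
      · rw [h]
      · exact le_trans (ih (by omega) (by omega)) (hmono m (by omega)).le
  set A : ℕ → Set Ω := fun j => {ω | X ω ∈ seg q n j} with hAdef
  have hA_meas : ∀ j, MeasurableSet (A j) := fun j => hmX (seg_measurable q n j)
  have hsub_Iic : ∀ j, j ≤ n → seg q n j ⊆ Set.Iic (q j) := by
    intro j hj
    rcases Nat.eq_zero_or_pos j with rfl | h1
    · rw [seg_zero]
    · rw [seg_mid q h1 hj]; exact Set.Ioc_subset_Iic_self
  have hsub_Ioi : ∀ j, 1 ≤ j → j ≤ n + 1 → seg q n j ⊆ Set.Ioi (q (j - 1)) := by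
    intro j h1 hj
    rcases Nat.lt_or_ge j (n + 1) with h | h
    · rw [seg_mid q h1 (by omega)]; exact Set.Ioc_subset_Ioi_self
    · have hje : j = n + 1 := le_antisymm hj h
      subst hje
      rw [seg_top]
      simp
  have hsegdisj : ∀ i j, i < j → j ≤ n + 1 → Disjoint (seg q n i) (seg q n j) :=
    fun i j hij hj =>
      (Set.Iic_disjoint_Ioi (hqle i (j - 1) (by omega) (by omega))).mono
        (hsub_Iic i (by omega)) (hsub_Ioi j (by omega) hj)
  have hAdisj : Set.Pairwise ↑(Finset.range (n + 2)) (Function.onFun Disjoint A) := by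
    intro i hi j hj hne
    simp only [Finset.coe_range, Set.mem_Iio] at hi hj
    rcases lt_or_gt_of_ne hne with h | h
    · exact (hsegdisj i j h (by omega)).preimage X
    · exact ((hsegdisj j i h (by omega)).preimage X).symm
  have hcover : (⋃ j ∈ Finset.range (n + 2), A j) = Set.univ := by
    ext ω
    simp only [Set.mem_iUnion, Finset.mem_range, Set.mem_univ, iff_true, exists_prop]
    by_cases h0 : X ω ≤ q 0
    · exact ⟨0, by omega, by rw [hAdef]; simpa [seg_zero] using h0⟩
    by_cases hb : q n < X ω
    · exact ⟨n + 1, by omega, by rw [hAdef]; simpa [seg_top] using hb⟩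
    · have hex : ∃ k, X ω ≤ q k := ⟨n, not_lt.mp hb⟩
      have hkn : Nat.find hex ≤ n := Nat.find_min' hex (not_lt.mp hb)
      have hk1 : Nat.find hex ≠ 0 := by
        intro h
        exact h0 (h ▸ Nat.find_spec hex)
      have hlt : q (Nat.find hex - 1) < X ω :=
        lt_of_not_ge (Nat.find_min hex (by omega))
      refine ⟨Nat.find hex, by omega, ?_⟩
      rw [hAdef]
      simp only [Set.mem_setOf_eq]
      rw [seg_mid q (by omega) hkn]
      exact ⟨hlt, Nat.find_spec hex⟩
  have hPApos : ∀ j, j ≤ n + 1 → 0 < P (A j) :=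
    fun j hj => (ENNReal.toReal_pos_iff.mp (hpos j hj)).1
  have hprA : ∀ j, segProb P X q n j = (P (A j)).toReal := fun j => rfl
  have hIntMean : ∀ j, j ≤ n + 1 →
      ∫ ω in A j, X ω ∂P = segProb P X q n j * segMean P X q n j := by
    intro j hj
    have hm : segMean P X q n j = (∫ ω in A j, X ω ∂P) / segProb P X q n j := rfl
    rw [hm, mul_comm, div_mul_cancel₀ _ (ne_of_gt (hpos j hj))]
  have hminX : ∀ s : ℝ, Integrable (fun ω => min s (X ω)) P := by
    intro s
    have h1 : Integrable (fun ω => max (s - X ω) 0) P := ((integrable_const s).sub hX).pos_part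
    refine ((integrable_const s).sub h1).congr (Filter.Eventually.of_forall fun ω => ?_)
    simp only [Pi.sub_apply]
    rcases le_total (X ω) s with h | h
    · rw [max_eq_left (by linarith), min_eq_right h]; ring
    · rw [max_eq_right (by linarith), min_eq_left h]; ring
  have hpospart : ∀ c : ℝ, Integrable (fun ω => max (c - X ω) 0) P :=
    fun c => ((integrable_const c).sub hX).pos_part
  have hnegpart : ∀ c : ℝ, Integrable (fun ω => max (X ω - c) 0) P :=
    fun c => (hX.sub (integrable_const c)).pos_part
  have hdecomp : ∀ f : Ω → ℝ, Integrable f P →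
      ∫ ω, f ω ∂P = ∑ j ∈ Finset.range (n + 2), ∫ ω in A j, f ω ∂P := by
    intro f hf
    rw [← setIntegral_univ, ← hcover,
      integral_biUnion_finset _ (fun j _ => hA_meas j) hAdisj (fun j _ => hf.integrableOn)]
  have hmean_le : ∀ j, j ≤ n → segMean P X q n j ≤ q j := by
    intro j hj
    have h1 : ∫ ω in A j, X ω ∂P ≤ ∫ ω in A j, q j ∂P :=
      setIntegral_mono_on hX.integrableOn (integrable_const _).integrableOn (hA_meas j)
        (fun ω hω => hsub_Iic j hj hω)
    rw [setIntegral_const, smul_eq_mul] at h1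
    show (∫ ω in A j, X ω ∂P) / segProb P X q n j ≤ q j
    rw [div_le_iff₀ (hpos j (by omega)), hprA, mul_comm]
    exact h1
  have hmean_gt : ∀ j, 1 ≤ j → j ≤ n + 1 → q (j - 1) < segMean P X q n j := by
    intro j h1 hj
    have hsub := hsub_Ioi j h1 hj
    have hposint : 0 < ∫ ω in A j, (X ω - q (j - 1)) ∂P := by
      rw [setIntegral_pos_iff_support_of_nonneg_ae
        ((ae_restrict_iff' (hA_meas j)).2 (ae_of_all _
          fun ω hω => sub_nonneg.mpr (le_of_lt (hsub hω))))
        (hX.sub (integrable_const _)).integrableOn]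
      refine lt_of_lt_of_le (hPApos j hj) (measure_mono fun ω hω => ?_)
      exact ⟨sub_ne_zero.mpr (ne_of_gt (hsub hω)), hω⟩
    have h2 : ∫ ω in A j, (X ω - q (j - 1)) ∂P
        = ∫ ω in A j, X ω ∂P - (P (A j)).toReal * q (j - 1) := by
      rw [integral_sub hX.integrableOn (integrable_const _).integrableOn,
        setIntegral_const, smul_eq_mul, measureReal_def]
    show q (j - 1) < (∫ ω in A j, X ω ∂P) / segProb P X q n j
    rw [lt_div_iff₀ (hpos j hj), hprA]
    nlinarith [hposint, h2]
  -- the key collapse of the difference to a single segment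
  have key1 : ∀ k, 1 ≤ k → k ≤ n → ∀ s, q (k - 1) < s → s ≤ q k →
      ftilde P X q n s - ∫ ω, min s (X ω) ∂P
        = segProb P X q n k * min s (segMean P X q n k) - ∫ ω in A k, min s (X ω) ∂P := by
    intro k h1 hk s hs1 hs2
    have hft : ftilde P X q n s
        = ∑ j ∈ Finset.range (n + 2), segProb P X q n j * min s (segMean P X q n j) := rfl
    rw [hft, hdecomp _ (hminX s), ← Finset.sum_sub_distrib]
    refine Finset.sum_eq_single_of_mem k (Finset.mem_range.mpr (by omega)) ?_
    intro j hj hne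
    rw [Finset.mem_range] at hj
    rcases lt_or_gt_of_ne hne with hlt | hgt
    · have hjn : j ≤ n := by omega
      have hqj : q j ≤ q (k - 1) := hqle j (k - 1) (by omega) (by omega)
      have hmin : ∫ ω in A j, min s (X ω) ∂P = ∫ ω in A j, X ω ∂P :=
        setIntegral_congr_fun (hA_meas j)
          (fun ω hω => min_eq_right (le_trans (hsub_Iic j hjn hω) (by linarith)))
      have hmu : min s (segMean P X q n j) = segMean P X q n j :=
        min_eq_right (le_trans (hmean_le j hjn) (by linarith))
      rw [hmin, hmu, hIntMean j (by omega), sub_self]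
    · have hj1 : 1 ≤ j := by omega
      have hq : s ≤ q (j - 1) := le_trans hs2 (hqle k (j - 1) (by omega) (by omega))
      have hmin : ∫ ω in A j, min s (X ω) ∂P = ∫ ω in A j, s ∂P :=
        setIntegral_congr_fun (hA_meas j)
          (fun ω hω => min_eq_left
            (le_of_lt (lt_of_le_of_lt hq (hsub_Ioi j hj1 (by omega) hω))))
      have hmu : min s (segMean P X q n j) = s :=
        min_eq_left (le_trans hq (hmean_gt j hj1 (by omega)).le)
      rw [hmin, hmu, setIntegral_const, smul_eq_mul, measureReal_def, hprA, sub_self]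
  have keyA : ∀ k, k ≤ n + 1 → ∀ s, s ≤ segMean P X q n k →
      segProb P X q n k * min s (segMean P X q n k) - ∫ ω in A k, min s (X ω) ∂P
        = ∫ ω in A k, max (s - X ω) 0 ∂P := by
    intro k hk s hs2
    rw [min_eq_left hs2]
    have h3 : segProb P X q n k * s = ∫ ω in A k, s ∂P := by
      rw [setIntegral_const, smul_eq_mul, measureReal_def, hprA]
    rw [h3, ← integral_sub (integrable_const s).integrableOn (hminX s).integrableOn]
    refine setIntegral_congr_fun (hA_meas k) fun ω _ => ?_
    rcases le_total (X ω) s with h | h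
    · rw [min_eq_right h, max_eq_left (by linarith)]
    · rw [min_eq_left h, max_eq_right (by linarith)]; ring
  have keyB : ∀ k, k ≤ n + 1 → ∀ s, segMean P X q n k ≤ s →
      segProb P X q n k * min s (segMean P X q n k) - ∫ ω in A k, min s (X ω) ∂P
        = ∫ ω in A k, max (X ω - s) 0 ∂P := by
    intro k hk s hs2
    rw [min_eq_right hs2, ← hIntMean k hk,
      ← integral_sub hX.integrableOn (hminX s).integrableOn]
    refine setIntegral_congr_fun (hA_meas k) fun ω _ => ?_
    rcases le_total (X ω) s with h | h
    · rw [min_eq_right h, max_eq_right (by linarith)]; ring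
    · rw [min_eq_left h, max_eq_left (by linarith)]
  have hzero : ∀ k, k ≤ n + 1 →
      ∫ ω in A k, max (X ω - segMean P X q n k) 0 ∂P
        = ∫ ω in A k, max (segMean P X q n k - X ω) 0 ∂P := by
    intro k hk
    set c := segMean P X q n k with hc
    have hmean0 : ∫ ω in A k, (X ω - c) ∂P = 0 := by
      rw [integral_sub hX.integrableOn (integrable_const _).integrableOn,
        setIntegral_const, smul_eq_mul, measureReal_def, hIntMean k hk, ← hprA]
      ring
    have h2 : ∫ ω in A k, (max (X ω - c) 0 - max (c - X ω) 0) ∂P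
        = ∫ ω in A k, (X ω - c) ∂P := by
      refine integral_congr_ae (Filter.Eventually.of_forall fun ω => ?_)
      show max (X ω - c) 0 - max (c - X ω) 0 = X ω - c
      rcases le_total (X ω) c with h | h
      · rw [max_eq_right (by linarith), max_eq_left (by linarith)]; ring
      · rw [max_eq_left (by linarith), max_eq_right (by linarith)]; ring
    have h3 := integral_sub (hnegpart c).integrableOn (hpospart c).integrableOn
      (μ := P.restrict (A k))
    rw [h2, hmean0] at h3
    linarith [h3]
  -- rewriting the statement's integral
  have hT_meas : ∀ c : ℝ, MeasurableSet {ω | X ω ≤ c} := fun c => hmX measurableSet_Iic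
  have hBeq : ∀ k, 1 ≤ k → k ≤ n →
      {ω | X ω ∈ Set.Ioc (q (k - 1)) (segMean P X q n k)}
        = A k ∩ {ω | X ω ≤ segMean P X q n k} := by
    intro k h1 hk
    ext ω
    simp only [Set.mem_setOf_eq, Set.mem_inter_iff, Set.mem_Ioc, hAdef, seg_mid q h1 hk]
    constructor
    · rintro ⟨h2, h3⟩
      exact ⟨⟨h2, le_trans h3 (hmean_le k hk)⟩, h3⟩
    · rintro ⟨⟨h2, _⟩, h3⟩
      exact ⟨h2, h3⟩
  have hEk1 : ∀ k, 1 ≤ k → k ≤ n →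
      ∫ ω in {ω | X ω ∈ Set.Ioc (q (k - 1)) (segMean P X q n k)},
          (segMean P X q n k - X ω) ∂P
        = ∫ ω in A k ∩ {ω | X ω ≤ segMean P X q n k}, (segMean P X q n k - X ω) ∂P := by
    intro k h1 hk
    rw [hBeq k h1 hk]
  have hEk2 : ∀ k, 1 ≤ k → k ≤ n →
      ∫ ω in {ω | X ω ∈ Set.Ioc (q (k - 1)) (segMean P X q n k)},
          (segMean P X q n k - X ω) ∂P
        = ∫ ω in A k, max (segMean P X q n k - X ω) 0 ∂P := by
    intro k h1 hk
    set c := segMean P X q n k with hc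
    have hsp := integral_inter_add_diff (μ := P) (s := A k) (t := {ω | X ω ≤ c})
      (f := fun ω => max (c - X ω) 0) (hT_meas c) (hpospart c).integrableOn
    have e1 : ∫ ω in A k ∩ {ω | X ω ≤ c}, max (c - X ω) 0 ∂P
        = ∫ ω in A k ∩ {ω | X ω ≤ c}, (c - X ω) ∂P :=
      setIntegral_congr_fun ((hA_meas k).inter (hT_meas c))
        (fun ω hω => max_eq_left (by have := hω.2; simp only [Set.mem_setOf_eq] at this; linarith))
    have e2 : ∫ ω in A k \ {ω | X ω ≤ c}, max (c - X ω) 0 ∂P = 0 := by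
      rw [setIntegral_congr_fun (f := fun ω => max (c - X ω) 0) (g := fun _ => (0 : ℝ))
        ((hA_meas k).diff (hT_meas c))
        (fun ω hω => max_eq_right (by
          have := hω.2; simp only [Set.mem_setOf_eq] at this; push_neg at this; linarith)),
        integral_zero]
    rw [hEk1 k h1 hk, ← hsp, e1, e2, add_zero]
  have hEk3 : ∀ k, 1 ≤ k → k ≤ n →
      ∫ ω in {ω | X ω ∈ Set.Ioc (q (k - 1)) (segMean P X q n k)},
          (segMean P X q n k - X ω) ∂P
        = ∫ ω in A k \ {ω | X ω ≤ segMean P X q n k}, (X ω - segMean P X q n k) ∂P := by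
    intro k h1 hk
    set c := segMean P X q n k with hc
    have hsp := integral_inter_add_diff (μ := P) (s := A k) (t := {ω | X ω ≤ c})
      (f := fun ω => max (X ω - c) 0) (hT_meas c) (hnegpart c).integrableOn
    have e1 : ∫ ω in A k ∩ {ω | X ω ≤ c}, max (X ω - c) 0 ∂P = 0 := by
      rw [setIntegral_congr_fun (f := fun ω => max (X ω - c) 0) (g := fun _ => (0 : ℝ))
        ((hA_meas k).inter (hT_meas c))
        (fun ω hω => max_eq_right (by
          have := hω.2; simp only [Set.mem_setOf_eq] at this; linarith)),
        integral_zero]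
    have e2 : ∫ ω in A k \ {ω | X ω ≤ c}, max (X ω - c) 0 ∂P
        = ∫ ω in A k \ {ω | X ω ≤ c}, (X ω - c) ∂P :=
      setIntegral_congr_fun ((hA_meas k).diff (hT_meas c))
        (fun ω hω => max_eq_left (by
          have := hω.2; simp only [Set.mem_setOf_eq] at this; push_neg at this; linarith))
    rw [hEk2 k h1 hk, ← hzero k (by omega), ← hsp, e1, e2, zero_add]
  have hnn : ∀ k (f : Ω → ℝ), (∀ ω, 0 ≤ f ω) → 0 ≤ ∫ ω in A k, f ω ∂P :=
    fun k f h => setIntegral_nonneg (hA_meas k) fun ω _ => h ω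
  have hmonoA : ∀ k (s s' : ℝ), s ≤ s' →
      ∫ ω in A k, max (s - X ω) 0 ∂P ≤ ∫ ω in A k, max (s' - X ω) 0 ∂P :=
    fun k s s' h => setIntegral_mono_on (hpospart s).integrableOn (hpospart s').integrableOn
      (hA_meas k) (fun ω _ => max_le_max (by linarith) le_rfl)
  have hmonoB : ∀ k (s s' : ℝ), s' ≤ s →
      ∫ ω in A k, max (X ω - s) 0 ∂P ≤ ∫ ω in A k, max (X ω - s') 0 ∂P :=
    fun k s s' h => setIntegral_mono_on (hnegpart s).integrableOn (hnegpart s').integrableOn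
      (hA_meas k) (fun ω _ => max_le_max (by linarith) le_rfl)
  have hdiff_le : ∀ k, 1 ≤ k → k ≤ n → ∀ s, q (k - 1) < s → s ≤ q k →
      |ftilde P X q n s - ∫ ω, min s (X ω) ∂P|
        ≤ ∫ ω in {ω | X ω ∈ Set.Ioc (q (k - 1)) (segMean P X q n k)},
            (segMean P X q n k - X ω) ∂P := by
    intro k h1 hk s hs1 hs2
    rw [key1 k h1 hk s hs1 hs2, hEk2 k h1 hk]
    rcases le_total s (segMean P X q n k) with h | h
    · rw [keyA k (by omega) s h, abs_of_nonneg (hnn k _ fun ω => le_max_right _ _)]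
      exact hmonoA k s _ h
    · rw [keyB k (by omega) s h, abs_of_nonneg (hnn k _ fun ω => le_max_right _ _)]
      exact le_of_le_of_eq (hmonoB k s _ h) (hzero k (by omega))
  have hdiff_eq : ∀ k, 1 ≤ k → k ≤ n →
      |ftilde P X q n (segMean P X q n k)
          - ∫ ω, min (segMean P X q n k) (X ω) ∂P|
        = ∫ ω in {ω | X ω ∈ Set.Ioc (q (k - 1)) (segMean P X q n k)},
            (segMean P X q n k - X ω) ∂P := by
    intro k h1 hk
    have hmu1 : q (k - 1) < segMean P X q n k := hmean_gt k h1 (by omega)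
    have hmu2 : segMean P X q n k ≤ q k := hmean_le k hk
    rw [key1 k h1 hk _ hmu1 hmu2, keyA k (by omega) _ le_rfl,
      abs_of_nonneg (hnn k _ fun ω => le_max_right _ _), hEk2 k h1 hk]
  have hindex : ∀ s ∈ Set.Ioc a b, ∃ k, 1 ≤ k ∧ k ≤ n ∧ q (k - 1) < s ∧ s ≤ q k := by
    intro s hs
    have hex : ∃ k, s ≤ q k := ⟨n, by rw [hqn]; exact hs.2⟩
    have h0 : Nat.find hex ≠ 0 := by
      intro h
      have := Nat.find_spec hex
      rw [h, hq0] at this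
      exact absurd this (not_le.mpr hs.1)
    exact ⟨Nat.find hex, by omega, Nat.find_min' hex (by rw [hqn]; exact hs.2),
      not_le.mp (Nat.find_min hex (by omega)), Nat.find_spec hex⟩
  constructor
  · apply IsGreatest.csSup_eq
    constructor
    · obtain ⟨k0, hk0, hM⟩ := Finset.exists_mem_eq_sup' (Finset.nonempty_Icc.2 hn)
        (fun j => ∫ ω in {ω | X ω ∈ Set.Ioc (q (j - 1)) (segMean P X q n j)},
          (segMean P X q n j - X ω) ∂P)
      rw [Finset.mem_Icc] at hk0
      refine ⟨segMean P X q n k0, ⟨?_, ?_⟩, ?_⟩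
      · rw [← hq0]
        exact lt_of_le_of_lt (hqle 0 (k0 - 1) (by omega) (by omega))
          (hmean_gt k0 hk0.1 (by omega))
      · rw [← hqn]
        exact le_trans (hmean_le k0 hk0.2) (hqle k0 n hk0.2 le_rfl)
      · show |ftilde P X q n (segMean P X q n k0)
            - ∫ ω, min (segMean P X q n k0) (X ω) ∂P| = _
        rw [hdiff_eq k0 hk0.1 hk0.2]
        exact hM.symm
    · rintro y ⟨s, hs, rfl⟩
      obtain ⟨k, hk1, hkn, hsk1, hsk2⟩ := hindex s hs
      exact le_trans (hdiff_le k hk1 hkn s hsk1 hsk2)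
        (Finset.le_sup'
          (fun j => ∫ ω in {ω | X ω ∈ Set.Ioc (q (j - 1)) (segMean P X q n j)},
            (segMean P X q n j - X ω) ∂P)
          (Finset.mem_Icc.mpr ⟨hk1, hkn⟩))
  · apply Finset.sup'_le
    intro k hk
    rw [Finset.mem_Icc] at hk
    obtain ⟨h1, hkn⟩ := hk
    refine le_trans ?_ (Finset.le_sup'
      (fun j => segProb P X q n j * (q j - q (j - 1)) / 4)
      (Finset.mem_Icc.mpr ⟨h1, hkn⟩))
    set c := segMean P X q n k with hc
    set E := ∫ ω in {ω | X ω ∈ Set.Ioc (q (k - 1)) c}, (c - X ω) ∂P with hE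
    show E ≤ segProb P X q n k * (q k - q (k - 1)) / 4
    set t := (P (A k ∩ {ω | X ω ≤ c})).toReal with ht
    set u := (P (A k \ {ω | X ω ≤ c})).toReal with hu
    have htu : t + u = segProb P X q n k := by
      rw [ht, hu, hprA, ← ENNReal.toReal_add (measure_ne_top _ _) (measure_ne_top _ _),
        measure_inter_add_diff _ (hT_meas c)]
    have hE0 : 0 ≤ E := by
      rw [hE, hEk2 k h1 hkn]
      exact hnn k _ fun ω => le_max_right _ _
    have hb1 : E ≤ (c - q (k - 1)) * t := by
      rw [hE, hEk1 k h1 hkn]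
      have step : ∫ ω in A k ∩ {ω | X ω ≤ c}, (c - X ω) ∂P
          ≤ ∫ ω in A k ∩ {ω | X ω ≤ c}, (c - q (k - 1)) ∂P := by
        refine setIntegral_mono_on ((integrable_const c).sub hX).integrableOn
          (integrable_const _).integrableOn ((hA_meas k).inter (hT_meas c)) fun ω hω => ?_
        have h2 : q (k - 1) < X ω := hsub_Ioi k (by omega) (by omega) hω.1
        linarith
      rw [setIntegral_const, smul_eq_mul, measureReal_def, mul_comm] at step
      exact le_of_le_of_eq step (by rw [ht, mul_comm])
    have hb2 : E ≤ (q k - c) * u := by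
      rw [hE, hEk3 k h1 hkn]
      have step : ∫ ω in A k \ {ω | X ω ≤ c}, (X ω - c) ∂P
          ≤ ∫ ω in A k \ {ω | X ω ≤ c}, (q k - c) ∂P := by
        refine setIntegral_mono_on (hX.sub (integrable_const c)).integrableOn
          (integrable_const _).integrableOn ((hA_meas k).diff (hT_meas c)) fun ω hω => ?_
        have h2 : X ω ≤ q k := hsub_Iic k hkn hω.1
        linarith
      rw [setIntegral_const, smul_eq_mul, measureReal_def] at step
      exact le_of_le_of_eq step (by rw [hu, mul_comm])
    have hα : 0 < c - q (k - 1) := sub_pos.mpr (hmean_gt k h1 (by omega))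
    have hβ : 0 ≤ q k - c := sub_nonneg.mpr (hmean_le k hkn)
    have ht0 : 0 ≤ t := ENNReal.toReal_nonneg
    have hu0 : 0 ≤ u := ENNReal.toReal_nonneg
    rw [← htu]
    nlinarith [mul_le_mul_of_nonneg_left hb1 hβ, mul_le_mul_of_nonneg_left hb2 hα.le,
      sq_nonneg (c - q (k - 1) - (q k - c)), mul_nonneg ht0 hu0, hE0]

/-- The global approximation error satisfies
`e_{X,X̃} = sup_{s ∈ (a,b]} |f̃(s) − f_X(s)| = max_{j ∈ {1,…,n}} E_{a_j,μ_j}[μ_j − X]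
  ≤ max_{j ∈ {1,…,n}} p_j (b_j − a_j)/4`. -/
theorem global_error_formula {Ω : Type*} [MeasurableSpace Ω]
    (P : Measure Ω) [IsProbabilityMeasure P]
    (X : Ω → ℝ) (hX : Integrable X P)
    (a b : ℝ) (hab : a < b) (n : ℕ) (hn : 1 ≤ n)
    (q : ℕ → ℝ) (hq0 : q 0 = a) (hqn : q n = b)
    (hmono : ∀ i < n, q i < q (i + 1))
    (hpos : ∀ j ≤ n + 1, 0 < segProb P X q n j) :
    (sSup ((fun s => |ftilde P X q n s - ∫ ω, min s (X ω) ∂P|) '' Set.Ioc a b)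
        = (Finset.Icc 1 n).sup' (Finset.nonempty_Icc.2 hn)
            (fun j => ∫ ω in {ω | X ω ∈ Set.Ioc (q (j - 1)) (segMean P X q n j)},
              (segMean P X q n j - X ω) ∂P)) ∧
      (Finset.Icc 1 n).sup' (Finset.nonempty_Icc.2 hn)
          (fun j => ∫ ω in {ω | X ω ∈ Set.Ioc (q (j - 1)) (segMean P X q n j)},
            (segMean P X q n j - X ω) ∂P)
        ≤ (Finset.Icc 1 n).sup' (Finset.nonempty_Icc.2 hn)
            (fun j => segProb P X q n j * (q j - q (j - 1)) / 4) := by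
  obtain ⟨Y, hYm, hXY⟩ : ∃ Y : Ω → ℝ, Measurable Y ∧ X =ᵐ[P] Y :=
    ⟨hX.1.mk X, hX.1.stronglyMeasurable_mk.measurable, hX.1.ae_eq_mk⟩
  have hY : Integrable Y P := hX.congr hXY
  have hsets : ∀ S : Set ℝ, {ω | X ω ∈ S} =ᵐ[P] {ω | Y ω ∈ S} := by
    intro S
    filter_upwards [hXY] with ω h
    change (X ω ∈ S) = (Y ω ∈ S)
    rw [h]
  have hprob : ∀ j, segProb P X q n j = segProb P Y q n j := by
    intro j
    unfold segProb
    rw [measure_congr (hsets _)]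
  have hmean : ∀ j, segMean P X q n j = segMean P Y q n j := by
    intro j
    unfold segMean
    rw [hprob j, setIntegral_congr_set (hsets _),
      integral_congr_ae (ae_restrict_of_ae hXY)]
  have hft : ∀ s, ftilde P X q n s = ftilde P Y q n s := by
    intro s
    unfold ftilde
    exact Finset.sum_congr rfl fun j _ => by rw [hprob j, hmean j]
  have hfX : ∀ s : ℝ, ∫ ω, min s (X ω) ∂P = ∫ ω, min s (Y ω) ∂P := fun s =>
    integral_congr_ae (hXY.mono fun ω h => by simp only [h])
  have hE : ∀ j, (∫ ω in {ω | X ω ∈ Set.Ioc (q (j - 1)) (segMean P X q n j)},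
      (segMean P X q n j - X ω) ∂P)
      = ∫ ω in {ω | Y ω ∈ Set.Ioc (q (j - 1)) (segMean P Y q n j)},
        (segMean P Y q n j - Y ω) ∂P := by
    intro j
    rw [hmean j, setIntegral_congr_set (hsets _)]
    exact integral_congr_ae (ae_restrict_of_ae (hXY.mono fun ω h => by simp only [h]))
  have hpos' : ∀ j ≤ n + 1, 0 < segProb P Y q n j := fun j hj => hprob j ▸ hpos j hj
  have h1 : (fun s => |ftilde P X q n s - ∫ ω, min s (X ω) ∂P|)
      = fun s => |ftilde P Y q n s - ∫ ω, min s (Y ω) ∂P| := by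
    funext s; rw [hft s, hfX s]
  have h2 : (Finset.Icc 1 n).sup' (Finset.nonempty_Icc.2 hn)
      (fun j => ∫ ω in {ω | X ω ∈ Set.Ioc (q (j - 1)) (segMean P X q n j)},
        (segMean P X q n j - X ω) ∂P)
      = (Finset.Icc 1 n).sup' (Finset.nonempty_Icc.2 hn)
      (fun j => ∫ ω in {ω | Y ω ∈ Set.Ioc (q (j - 1)) (segMean P Y q n j)},
        (segMean P Y q n j - Y ω) ∂P) :=
    Finset.sup'_congr _ rfl fun j _ => hE j
  have h3 : (Finset.Icc 1 n).sup' (Finset.nonempty_Icc.2 hn)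
      (fun j => segProb P X q n j * (q j - q (j - 1)) / 4)
      = (Finset.Icc 1 n).sup' (Finset.nonempty_Icc.2 hn)
      (fun j => segProb P Y q n j * (q j - q (j - 1)) / 4) :=
    Finset.sup'_congr _ rfl fun j _ => by rw [hprob j]
  rw [h1, h2, h3]
  exact global_error_formula_meas P Y hYm hY a b hab n hn q hq0 hqn hmono hpos'
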